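/- If every state of a finite Markov chain is aperiodic and the chain is irreducible, then there exists N such that for all n ≥ N and all states i, j, (P^n)(i,j) > 0 (the matrix is eventually positive). -/

import Mathlib

/-- An addition-closed set of naturals whose common divisors divide 1
contains all sufficiently large naturals. -/
lemma addClosed_gcd_one_cofinite (A : Set ℕ)
    (hadd : ∀ a ∈ A, ∀ b ∈ A, a + b ∈ A)
    (hgcd : ∀ d : ℕ, (∀ k ∈ A, d ∣ k) → d ∣ 1) :
    ∃ N : ℕ, ∀ n : ℕ, N ≤ n → n ∈ A := by
  -- multiples of elements are in A
  have hmul : ∀ c : ℕ, 1 ≤ c → ∀ x ∈ A, c * x ∈ A := by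
    intro c hc
    induction c with
    | zero => omega
    | succ c ih =>
      intro x hx
      rcases Nat.eq_or_lt_of_le hc with h | h
      · simpa [← h] using hx
      · have := ih (by omega) x hx
        have := hadd _ this _ hx
        simpa [Nat.succ_mul] using this
  -- the subgroup of ℤ generated by A
  set A' : Set ℤ := (fun n : ℕ => (n : ℤ)) '' A with hA'
  set H : AddSubgroup ℤ := AddSubgroup.closure A' with hH
  obtain ⟨g, hg⟩ := Int.subgroup_cyclic H
  have hdvd : ∀ k ∈ A, g.natAbs ∣ k := by
    intro k hk
    have hkH : (k : ℤ) ∈ H := AddSubgroup.subset_closure ⟨k, hk, rfl⟩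
    rw [hg, AddSubgroup.mem_closure_singleton] at hkH
    obtain ⟨n, hn⟩ := hkH
    have : g ∣ (k : ℤ) := ⟨n, by rw [← hn, zsmul_eq_mul, Int.cast_id, mul_comm]⟩
    have := Int.natAbs_dvd_natAbs.mpr this
    simpa using this
  have hg1 : g.natAbs ∣ 1 := hgcd _ hdvd
  have hone : (1 : ℤ) ∈ H := by
    rw [hg]
    have h : g.natAbs = 1 := Nat.dvd_one.mp hg1
    have hgmem : g ∈ AddSubgroup.closure {g} :=
      AddSubgroup.subset_closure rfl
    rcases Int.natAbs_eq g with he | he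
    · rw [h] at he
      have hg1' : g = 1 := by exact_mod_cast he
      rw [hg1']
      exact AddSubgroup.subset_closure rfl
    · rw [h] at he
      have hg1' : g = -1 := by rw [he]; norm_num
      rw [hg1']
      simpa using AddSubgroup.neg_mem _
        (AddSubgroup.subset_closure (Set.mem_singleton (-1 : ℤ)))
  -- every element of H is a difference of elements of A ∪ {0}
  have hdiff : ∀ x ∈ H, ∃ a b : ℕ, (a ∈ A ∨ a = 0) ∧ (b ∈ A ∨ b = 0) ∧
      x = (a : ℤ) - b := by
    intro x hx
    induction hx using AddSubgroup.closure_induction with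
    | mem y hy =>
      obtain ⟨a, ha, rfl⟩ := hy
      exact ⟨a, 0, Or.inl ha, Or.inr rfl, by simp⟩
    | zero => exact ⟨0, 0, Or.inr rfl, Or.inr rfl, by simp⟩
    | add y z hy hz ihy ihz =>
      obtain ⟨a, b, ha, hb, rfl⟩ := ihy
      obtain ⟨c, d, hc, hd, rfl⟩ := ihz
      refine ⟨a + c, b + d, ?_, ?_, by push_cast; ring⟩
      · rcases ha with ha | ha <;> rcases hc with hc | hc
        · exact Or.inl (hadd _ ha _ hc)
        · subst hc; simpa using Or.inl ha
        · subst ha; simpa using Or.inl hc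
        · subst ha; subst hc; exact Or.inr rfl
      · rcases hb with hb | hb <;> rcases hd with hd | hd
        · exact Or.inl (hadd _ hb _ hd)
        · subst hd; simpa using Or.inl hb
        · subst hb; simpa using Or.inl hd
        · subst hb; subst hd; exact Or.inr rfl
    | neg y hy ihy =>
      obtain ⟨a, b, ha, hb, rfl⟩ := ihy
      exact ⟨b, a, hb, ha, by ring⟩
  obtain ⟨a, b, ha, hb, hab⟩ := hdiff 1 hone
  have hab'' : a = b + 1 := by
    have h : (a : ℤ) = (b : ℤ) + 1 := by linarith [hab]
    exact_mod_cast h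
  -- case 1 ∈ A
  have hone_case : (1 ∈ A) → ∃ N : ℕ, ∀ n : ℕ, N ≤ n → n ∈ A := by
    intro h1
    exact ⟨1, fun n hn => by simpa using hmul n hn 1 h1⟩
  rcases hb with hbA | hb0
  · rcases ha with haA | ha0
    · -- a = b+1 ∈ A, b ∈ A
      by_cases hb1 : b ≤ 1
      · rcases Nat.le_one_iff_eq_zero_or_eq_one.mp hb1 with h | h
        · exact hone_case (by rw [h] at hab''; rwa [hab''] at haA)
        · exact hone_case (h ▸ hbA)
      · have hb2 : 2 ≤ b := by omega
        refine ⟨b * b, fun n hn => ?_⟩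
        set q := n / b with hq
        set r := n % b with hr
        have hrb : r < b := Nat.mod_lt _ (by omega)
        have hqb : b ≤ q := by
          rw [hq, Nat.le_div_iff_mul_le (by omega : 0 < b)]
          exact hn
        have hrq : r ≤ q := le_trans (le_of_lt hrb) hqb
        obtain ⟨t, ht⟩ := Nat.exists_eq_add_of_le hrq
        have h1 : b * q + r = n := Nat.div_add_mod n b
        have hn_eq : n = (q - r) * b + r * (b + 1) := by
          have h2 : q - r = t := by omega
          have h3 : t * b + r * (b + 1) = b * (r + t) + r := by ring
          rw [h2, ht] at *
          linarith
        rw [hn_eq]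
        rcases Nat.eq_zero_or_pos r with hr0 | hr1
        · rw [hr0]; simpa [hr0] using hmul (q - 0) (by omega) b hbA
        · rcases Nat.eq_zero_or_pos (q - r) with hqr0 | hqr1
          · rw [hqr0]; simpa using hmul r hr1 (b + 1) (hab'' ▸ haA)
          · exact hadd _ (hmul _ hqr1 b hbA) _ (hmul r hr1 (b + 1) (hab'' ▸ haA))
    · omega
  · subst hb0
    rcases ha with haA | ha0
    · exact hone_case (by rwa [hab''] at haA)
    · omega

/-- For a finite irreducible Markov chain in which every state is aperiodic,
there exists `N` such that for all `n ≥ N` and all states `i, j`,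
`(P^n) i j > 0` (the matrix is eventually positive). -/
theorem markov_irreducible_aperiodic_eventually_positive
    {S : Type*} [Fintype S] [DecidableEq S] (P : Matrix S S ℝ)
    (hnn : ∀ i j, 0 ≤ P i j) (hrow : ∀ i, ∑ j, P i j = 1)
    (hirr : ∀ i j : S, ∃ n : ℕ, 1 ≤ n ∧ 0 < (P ^ n) i j)
    (haper : ∀ s : S, ∀ d : ℕ,
      (∀ k : ℕ, 1 ≤ k → 0 < (P ^ k) s s → d ∣ k) → d ∣ 1) :
    ∃ N : ℕ, ∀ n : ℕ, N ≤ n → ∀ i j : S, 0 < (P ^ n) i j := by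
  -- nonnegativity of powers
  have hpow_nn : ∀ n : ℕ, ∀ i j : S, 0 ≤ (P ^ n) i j := by
    intro n
    induction n with
    | zero => intro i j; by_cases h : i = j <;> simp [Matrix.one_apply, h]
    | succ n ih =>
      intro i j
      rw [pow_succ, Matrix.mul_apply]
      exact Finset.sum_nonneg fun k _ => mul_nonneg (ih i k) (hnn k j)
  -- positivity multiplies
  have hpos_mul : ∀ (m n : ℕ) (i k j : S), 0 < (P ^ m) i k → 0 < (P ^ n) k j →
      0 < (P ^ (m + n)) i j := by
    intro m n i k j hm hn
    rw [pow_add, Matrix.mul_apply]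
    refine Finset.sum_pos' (fun l _ => mul_nonneg (hpow_nn m i l) (hpow_nn n l j))
      ⟨k, Finset.mem_univ k, mul_pos hm hn⟩
  -- for each state, eventually positive return probabilities
  have hret : ∀ s : S, ∃ N : ℕ, ∀ n : ℕ, N ≤ n → 0 < (P ^ n) s s := by
    intro s
    obtain ⟨N, hN⟩ := addClosed_gcd_one_cofinite {k | 1 ≤ k ∧ 0 < (P ^ k) s s}
      (fun a ha b hb => ⟨by have h1 := ha.1; omega, hpos_mul a b s s s ha.2 hb.2⟩)
      (fun d hd => haper s d fun k hk1 hk2 => hd k ⟨hk1, hk2⟩)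
    exact ⟨N, fun n hn => (hN n hn).2⟩
  -- choose return thresholds and connection times
  choose Nf hNf using hret
  choose m hm1 hm2 using hirr
  refine ⟨(Finset.univ : Finset (S × S)).sup (fun p => Nf p.1 + m p.1 p.2) + 1,
    fun n hn i j => ?_⟩
  have hle : Nf i + m i j ≤ (Finset.univ : Finset (S × S)).sup
      (fun p => Nf p.1 + m p.1 p.2) :=
    Finset.le_sup (f := fun p => Nf p.1 + m p.1 p.2) (Finset.mem_univ (i, j))
  have hsplit : n = (n - m i j) + m i j := by omega
  rw [hsplit]
  exact hpos_mul _ _ i i j (hNf i _ (by omega)) (hm2 i j)
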